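/- Let V be holomorphic on an open subset of ℂ containing the real segment [−1,1], let δ ∈ ℝ and β ∈ (−1,1). There exist a₀ > 0 and C > 0 such that for every real a ≥ a₀ there is a unique b ∈ ℝ with Im ∫_{−1}^{β} √((a + i·b) − V(x) + i·δ) dx = 0, and this unique b satisfies |b − ( (Im ∫_{−1}^{β} V(x) dx)/(β+1) − δ )| ≤ C/a, where √ denotes the principal branch of the complex square root. -/

import Mathlib

open Complex Set intervalIntegral

private lemma s8_half_mul {z : ℂ} (hz : z ≠ 0) : z ^ (1/2:ℂ) * z ^ (1/2:ℂ) = z := by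
  rw [← Complex.cpow_add _ _ hz]; norm_num

private lemma s8_ne_zero_of_re_pos {z : ℂ} (hz : 0 < z.re) : z ≠ 0 := by
  intro h; rw [h] at hz; simp at hz

private lemma s8_half_re_pos {z : ℂ} (hz : 0 < z.re) : 0 < (z ^ (1/2:ℂ)).re := by
  have hz0 : z ≠ 0 := s8_ne_zero_of_re_pos hz
  rw [Complex.cpow_def_of_ne_zero hz0, Complex.exp_re]
  apply mul_pos (Real.exp_pos _)
  have harg : |z.arg| < Real.pi / 2 := Complex.abs_arg_lt_pi_div_two_iff.mpr (Or.inl hz)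
  have him : (Complex.log z * (1/2:ℂ)).im = z.arg / 2 := by
    simp [Complex.mul_im, Complex.log_im]; ring
  rw [him]
  have := abs_lt.mp harg
  apply Real.cos_pos_of_mem_Ioo
  constructor <;> [linarith; linarith]

private lemma s8_half_im_mul {z : ℂ} (hz : z ≠ 0) :
    2 * (z ^ (1/2:ℂ)).re * (z ^ (1/2:ℂ)).im = z.im := by
  have h := s8_half_mul hz
  have := congrArg Complex.im h
  rw [Complex.mul_im] at this
  linarith [this]

private lemma s8_half_re_sq_ge {z : ℂ} (hz : z ≠ 0) : z.re ≤ ((z ^ (1/2:ℂ)).re)^2 := by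
  have h := s8_half_mul hz
  have := congrArg Complex.re h
  rw [Complex.mul_re] at this
  nlinarith [sq_nonneg ((z ^ (1/2:ℂ)).im)]

private lemma s8_half_re_sq_le {z : ℂ} (hz : z ≠ 0) : ((z ^ (1/2:ℂ)).re)^2 ≤ ‖z‖ := by
  have h := s8_half_mul hz
  have habs : ‖z ^ (1/2:ℂ)‖ * ‖z ^ (1/2:ℂ)‖ = ‖z‖ := by
    rw [← norm_mul, h]
  nlinarith [Complex.abs_re_le_norm (z ^ (1/2:ℂ)), norm_nonneg (z ^ (1/2:ℂ)),
    abs_nonneg ((z ^ (1/2:ℂ)).re), le_abs_self ((z ^ (1/2:ℂ)).re), neg_abs_le ((z ^ (1/2:ℂ)).re)]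

private lemma s8_half_sub {z1 z2 : ℂ} (h1 : 0 < z1.re) (h2 : 0 < z2.re) :
    z2 ^ (1/2:ℂ) - z1 ^ (1/2:ℂ) = (z2 - z1) / (z1 ^ (1/2:ℂ) + z2 ^ (1/2:ℂ)) := by
  have hs : z1 ^ (1/2:ℂ) + z2 ^ (1/2:ℂ) ≠ 0 := by
    intro h
    have h' := congrArg Complex.re h
    rw [Complex.add_re] at h'
    have := s8_half_re_pos h1
    have := s8_half_re_pos h2
    simp at h'; linarith
  rw [eq_div_iff hs]
  have e : (z2 ^ (1/2:ℂ) - z1 ^ (1/2:ℂ)) * (z1 ^ (1/2:ℂ) + z2 ^ (1/2:ℂ))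
      = z2 ^ (1/2:ℂ) * z2 ^ (1/2:ℂ) - z1 ^ (1/2:ℂ) * z1 ^ (1/2:ℂ) := by ring
  rw [e, s8_half_mul (s8_ne_zero_of_re_pos h1), s8_half_mul (s8_ne_zero_of_re_pos h2)]

set_option maxHeartbeats 4000000 in
/-- left case of Theorem `curveper`: for `a` large, the equation
`Im ∫_{-1}^β √((a+ib) − V(x) + iδ) dx = 0` has a unique real solution `b`, and
`b = (Im ∫_{-1}^β V)/(β+1) − δ + O(1/a)`. -/
theorem stmt8 (V : ℂ → ℂ) (U : Set ℂ) (hU : IsOpen U)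
    (hUV : ∀ x ∈ Set.Icc (-1:ℝ) 1, (x : ℂ) ∈ U)
    (hV : DifferentiableOn ℂ V U) (δ : ℝ) (β : ℝ) (hβ : β ∈ Set.Ioo (-1:ℝ) 1) :
    ∃ a₀ : ℝ, 0 < a₀ ∧ ∃ C : ℝ, 0 < C ∧
      ∀ a : ℝ, a₀ ≤ a →
        (∃! b : ℝ,
          (∫ x in (-1:ℝ)..β,
            ((a : ℂ) + (b : ℂ) * Complex.I - V (x : ℂ) + Complex.I * δ) ^ (1/2 : ℂ)).im
            = 0) ∧
        ∀ b : ℝ,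
          (∫ x in (-1:ℝ)..β,
            ((a : ℂ) + (b : ℂ) * Complex.I - V (x : ℂ) + Complex.I * δ) ^ (1/2 : ℂ)).im
            = 0 →
          |b - ((∫ x in (-1:ℝ)..β, V (x : ℂ)).im / (β + 1) - δ)| ≤ C / a := by
  obtain ⟨hβ1, hβ2⟩ := hβ
  have hL : (0:ℝ) < β + 1 := by linarith
  have hVc : ContinuousOn (fun x : ℝ => V (x:ℂ)) (Set.Icc (-1:ℝ) 1) := by
    apply hV.continuousOn.comp Complex.continuous_ofReal.continuousOn
    intro x hx; exact hUV x hx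
  obtain ⟨M0, hM0⟩ := isCompact_Icc.exists_bound_of_continuousOn hVc
  set M : ℝ := max M0 1 with hMdef
  have hM1 : (1:ℝ) ≤ M := le_max_right _ _
  have hM : ∀ x ∈ Set.Icc (-1:ℝ) 1, ‖V (x:ℂ)‖ ≤ M := by
    intro x hx
    calc ‖V (x:ℂ)‖ = ‖V (x:ℂ)‖ := rfl
    _ ≤ M0 := hM0 x hx
    _ ≤ M := le_max_left _ _
  set C : ℝ := 2*M*(4*M+1) + 1 with hCdef
  have hCpos : 0 < C := by nlinarith
  refine ⟨4*M + 4 + C, by nlinarith, C, hCpos, ?_⟩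
  intro a ha
  -- basic constants
  have hapos : (0:ℝ) < a := by nlinarith
  have haM : (1:ℝ) ≤ a - M := by nlinarith
  have hCa : C ≤ a := by nlinarith
  have hsub : Set.Icc (-1:ℝ) β ⊆ Set.Icc (-1:ℝ) 1 := Set.Icc_subset_Icc le_rfl hβ2.le
  have huIcc : Set.uIcc (-1:ℝ) β = Set.Icc (-1:ℝ) β := Set.uIcc_of_le (by linarith)
  have huIoc : Set.uIoc (-1:ℝ) β = Set.Ioc (-1:ℝ) β := Set.uIoc_of_le (by linarith)
  set zf : ℝ → ℝ → ℂ := fun b x => (a : ℂ) + (b : ℂ) * Complex.I - V (x : ℂ) + Complex.I * (δ:ℂ) with hzf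
  set sf : ℝ → ℝ → ℂ := fun b x => zf b x ^ (1/2:ℂ) with hsf
  have hzre : ∀ b x : ℝ, (zf b x).re = a - (V (x:ℂ)).re := by
    intro b x; simp [hzf]
  have hzim : ∀ b x : ℝ, (zf b x).im = b + δ - (V (x:ℂ)).im := by
    intro b x; simp [hzf]; ring
  have hreV : ∀ x ∈ Set.Icc (-1:ℝ) 1, |(V (x:ℂ)).re| ≤ M := fun x hx =>
    (Complex.abs_re_le_norm _).trans (hM x hx)
  have himV : ∀ x ∈ Set.Icc (-1:ℝ) 1, |(V (x:ℂ)).im| ≤ M := fun x hx =>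
    (Complex.abs_im_le_norm _).trans (hM x hx)
  have hzrelb : ∀ b : ℝ, ∀ x ∈ Set.Icc (-1:ℝ) 1, a - M ≤ (zf b x).re := by
    intro b x hx
    rw [hzre]
    have h := abs_le.mp (hreV x hx)
    linarith [h.2]
  have hzrepos : ∀ b : ℝ, ∀ x ∈ Set.Icc (-1:ℝ) 1, 0 < (zf b x).re := by
    intro b x hx; have := hzrelb b x hx; linarith
  -- square root bounds
  set r₁ : ℝ := Real.sqrt (a - M) with hr₁
  set r₂ : ℝ := Real.sqrt (a + 3*M + 1) with hr₂
  have hr₁sq : r₁^2 = a - M := Real.sq_sqrt (by linarith)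
  have hr₂sq : r₂^2 = a + 3*M + 1 := Real.sq_sqrt (by nlinarith)
  have hr₁one : (1:ℝ) ≤ r₁ := by nlinarith [Real.sqrt_nonneg (a - M)]
  have hr₁₂ : r₁ ≤ r₂ := Real.sqrt_le_sqrt (by nlinarith)
  have hr₂pos : (0:ℝ) < r₂ := by linarith
  have hspos : ∀ b : ℝ, ∀ x ∈ Set.Icc (-1:ℝ) 1, 0 < (sf b x).re := fun b x hx =>
    s8_half_re_pos (hzrepos b x hx)
  have hulb : ∀ b : ℝ, ∀ x ∈ Set.Icc (-1:ℝ) 1, r₁ ≤ (sf b x).re := by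
    intro b x hx
    have h1 := s8_half_re_sq_ge (s8_ne_zero_of_re_pos (hzrepos b x hx))
    have h2 := hzrelb b x hx
    have h3 := hspos b x hx
    nlinarith
  have huub : ∀ b : ℝ, |b + δ| ≤ M + 1 → ∀ x ∈ Set.Icc (-1:ℝ) 1, (sf b x).re ≤ r₂ := by
    intro b hb x hx
    have h1 := s8_half_re_sq_le (s8_ne_zero_of_re_pos (hzrepos b x hx))
    have e1 : |(zf b x).re| ≤ a + M := by
      rw [hzre]
      have h := abs_le.mp (hreV x hx)
      rw [abs_le]; constructor <;> [nlinarith [h.1]; nlinarith [h.2]]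
    have e2 : |(zf b x).im| ≤ 2*M + 1 := by
      rw [hzim]
      have h := abs_le.mp (himV x hx)
      have h' := abs_le.mp hb
      rw [abs_le]; constructor <;> [linarith [h.2, h'.1]; linarith [h.1, h'.2]]
    have habs : ‖zf b x‖ ≤ a + 3*M + 1 := by
      have := Complex.norm_le_abs_re_add_abs_im (zf b x)
      linarith
    have h3 := hspos b x hx
    nlinarith
  -- continuity
  have hzc : ∀ b : ℝ, ContinuousOn (fun x : ℝ => zf b x) (Set.Icc (-1:ℝ) 1) := by
    intro b
    exact (continuousOn_const.sub hVc).add continuousOn_const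
  have hsc : ∀ b : ℝ, ContinuousOn (fun x : ℝ => sf b x) (Set.Icc (-1:ℝ) 1) := by
    intro b x hx
    have hca : ContinuousAt (fun w : ℂ => w ^ (1/2:ℂ)) (zf b x) :=
      continuousAt_cpow_const (Complex.mem_slitPlane_iff.mpr (Or.inl (hzrepos b x hx)))
    exact hca.comp_continuousWithinAt (hzc b x hx)
  have hIf : ∀ b : ℝ, IntervalIntegrable (fun x => sf b x) MeasureTheory.volume (-1:ℝ) β := by
    intro b
    apply ContinuousOn.intervalIntegrable
    rw [huIcc]; exact (hsc b).mono hsub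
  have hIim : ∀ b : ℝ, IntervalIntegrable (fun x => (sf b x).im) MeasureTheory.volume (-1:ℝ) β := by
    intro b
    apply ContinuousOn.intervalIntegrable
    rw [huIcc]
    exact (Complex.continuous_im.comp_continuousOn (hsc b)).mono hsub
  set F : ℝ → ℝ := fun b => (∫ x in (-1:ℝ)..β, sf b x).im with hF
  have hFim : ∀ b : ℝ, F b = ∫ x in (-1:ℝ)..β, (sf b x).im := by
    intro b
    simp only [hF]
    have := Complex.imCLM.intervalIntegral_comp_comm (hIf b)
    simpa using this.symm
  -- difference formula
  have hzdiff : ∀ b1 b2 x : ℝ, zf b2 x - zf b1 x = ((b2 - b1 : ℝ):ℂ) * Complex.I := by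
    intro b1 b2 x; simp [hzf]; ring
  have hsdiff : ∀ b1 b2 : ℝ, ∀ x ∈ Set.Icc (-1:ℝ) 1,
      sf b2 x - sf b1 x = ((b2 - b1 : ℝ):ℂ) * Complex.I / (sf b1 x + sf b2 x) := by
    intro b1 b2 x hx
    have h := s8_half_sub (hzrepos b1 x hx) (hzrepos b2 x hx)
    rw [hzdiff b1 b2 x] at h
    exact h
  have hdiffim : ∀ b1 b2 : ℝ, ∀ x ∈ Set.Icc (-1:ℝ) 1,
      (sf b2 x - sf b1 x).im
        = (b2 - b1) * (sf b1 x + sf b2 x).re / Complex.normSq (sf b1 x + sf b2 x) := by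
    intro b1 b2 x hx
    rw [hsdiff b1 b2 x hx, Complex.div_im]
    simp [Complex.mul_im, Complex.mul_re]
  have hsumre : ∀ b1 b2 : ℝ, ∀ x ∈ Set.Icc (-1:ℝ) 1, 0 < (sf b1 x + sf b2 x).re := by
    intro b1 b2 x hx
    rw [Complex.add_re]
    have := hspos b1 x hx; have := hspos b2 x hx; linarith
  -- strict monotonicity
  have hmono : StrictMono F := by
    intro b1 b2 hb
    have heq : F b2 - F b1 = ∫ x in (-1:ℝ)..β, ((sf b2 x).im - (sf b1 x).im) := by
      rw [hFim b2, hFim b1, ← intervalIntegral.integral_sub (hIim b2) (hIim b1)]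
    have hpos : 0 < ∫ x in (-1:ℝ)..β, ((sf b2 x).im - (sf b1 x).im) := by
      apply intervalIntegral_pos_of_pos_on ((hIim b2).sub (hIim b1))
      · intro x hx
        have hx' : x ∈ Set.Icc (-1:ℝ) 1 := hsub ⟨hx.1.le, hx.2.le⟩
        have h1 : (sf b2 x).im - (sf b1 x).im = (sf b2 x - sf b1 x).im := by
          rw [Complex.sub_im]
        rw [h1, hdiffim b1 b2 x hx']
        have hre := hsumre b1 b2 x hx'
        have hns : 0 < Complex.normSq (sf b1 x + sf b2 x) :=
          Complex.normSq_pos.mpr (fun h => by rw [h] at hre; simp at hre)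
        exact div_pos (mul_pos (by linarith) hre) hns
      · linarith
    linarith
  -- Lipschitz
  have hlip : LipschitzWith 1 F := by
    apply LipschitzWith.of_dist_le_mul
    intro b1 b2
    rw [Real.dist_eq, Real.dist_eq, NNReal.coe_one, one_mul]
    have heq : F b1 - F b2 = ∫ x in (-1:ℝ)..β, ((sf b1 x).im - (sf b2 x).im) := by
      rw [hFim b1, hFim b2, ← intervalIntegral.integral_sub (hIim b1) (hIim b2)]
    have hbnd : ∀ x ∈ Set.uIoc (-1:ℝ) β, ‖(sf b1 x).im - (sf b2 x).im‖ ≤ |b1 - b2| / 2 := by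
      intro x hx
      rw [huIoc] at hx
      have hx' : x ∈ Set.Icc (-1:ℝ) 1 := hsub ⟨hx.1.le, hx.2⟩
      have h1 : (sf b1 x).im - (sf b2 x).im = (sf b1 x - sf b2 x).im := by
        rw [Complex.sub_im]
      rw [Real.norm_eq_abs, h1]
      have h2 : |(sf b1 x - sf b2 x).im| ≤ ‖sf b1 x - sf b2 x‖ :=
        Complex.abs_im_le_norm _
      have h3 : ‖((b1 - b2 : ℝ):ℂ) * Complex.I‖ = |b1 - b2| := by
        rw [norm_mul, Complex.norm_I, Complex.norm_real, Real.norm_eq_abs, mul_one]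
      have h2' : ‖sf b1 x - sf b2 x‖ = |b1 - b2| / ‖sf b2 x + sf b1 x‖ := by
        rw [hsdiff b2 b1 x hx', norm_div, h3]
      rw [h2'] at h2
      have h4 : (2:ℝ) ≤ ‖sf b2 x + sf b1 x‖ := by
        have := Complex.re_le_norm (sf b2 x + sf b1 x)
        have h5 := hulb b1 x hx'; have h6 := hulb b2 x hx'
        rw [Complex.add_re] at this
        linarith
      calc |(sf b1 x - sf b2 x).im| ≤ |b1 - b2| / ‖sf b2 x + sf b1 x‖ := h2
        _ ≤ |b1 - b2| / 2 := by
            apply div_le_div_of_nonneg_left (abs_nonneg _) (by norm_num) h4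
    have hb := intervalIntegral.norm_integral_le_of_norm_le_const hbnd
    rw [← heq] at hb
    rw [Real.norm_eq_abs] at hb
    have : |β - (-1:ℝ)| = β + 1 := by rw [abs_of_pos (by linarith)]; ring
    rw [this] at hb
    calc |F b1 - F b2| ≤ |b1 - b2| / 2 * (β + 1) := hb
      _ ≤ |b1 - b2| := by nlinarith [abs_nonneg (b1 - b2)]
  -- the target constant T
  have hVint : IntervalIntegrable (fun x : ℝ => V (x:ℂ)) MeasureTheory.volume (-1:ℝ) β := by
    apply ContinuousOn.intervalIntegrable
    rw [huIcc]; exact hVc.mono hsub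
  have hIimV : IntervalIntegrable (fun x : ℝ => (V (x:ℂ)).im) MeasureTheory.volume (-1:ℝ) β := by
    apply ContinuousOn.intervalIntegrable
    rw [huIcc]
    exact (Complex.continuous_im.comp_continuousOn hVc).mono hsub
  set Tv : ℝ := (∫ x in (-1:ℝ)..β, V (x:ℂ)).im with hTv
  have hTvim : Tv = ∫ x in (-1:ℝ)..β, (V (x:ℂ)).im := by
    rw [hTv]
    have := Complex.imCLM.intervalIntegral_comp_comm hVint
    simpa using this.symm
  set T : ℝ := Tv / (β + 1) with hT
  have hTle : |T| ≤ M := by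
    have h1 : |Tv| ≤ M * |β - (-1:ℝ)| := by
      rw [hTvim]
      have := intervalIntegral.norm_integral_le_of_norm_le_const
        (C := M) (f := fun x : ℝ => (V (x:ℂ)).im) (a := (-1:ℝ)) (b := β) ?_
      · rw [Real.norm_eq_abs] at this; exact this
      · intro x hx
        rw [huIoc] at hx
        exact (himV x (hsub ⟨hx.1.le, hx.2⟩))
    have habs : |β - (-1:ℝ)| = β + 1 := by rw [abs_of_pos (by linarith)]; ring
    rw [habs] at h1
    rw [hT, abs_div, abs_of_pos hL, div_le_iff₀ hL]
    linarith
  -- weight bounds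
  set w0 : ℝ := 1/(2*r₂) with hw0
  set w1 : ℝ := 1/(2*r₁) with hw1
  have hw0pos : 0 < w0 := by rw [hw0]; positivity
  have hw01 : w0 ≤ w1 := by
    rw [hw0, hw1]
    apply one_div_le_one_div_of_le (by linarith) (by linarith)
  have hwcont : ∀ b : ℝ, ContinuousOn (fun x : ℝ => 1/(2*(sf b x).re)) (Set.Icc (-1:ℝ) 1) := by
    intro b
    apply ContinuousOn.div continuousOn_const
    · exact continuousOn_const.mul (Complex.continuous_re.comp_continuousOn (hsc b))
    · intro x hx
      have := hspos b x hx
      positivity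
  have hwintg : ∀ b : ℝ,
      IntervalIntegrable (fun x => 1/(2*(sf b x).re)) MeasureTheory.volume (-1:ℝ) β := by
    intro b
    apply ContinuousOn.intervalIntegrable
    rw [huIcc]; exact (hwcont b).mono hsub
  have hwlb : ∀ b : ℝ, |b + δ - T| ≤ 1 → ∀ x ∈ Set.Icc (-1:ℝ) 1,
      w0 ≤ 1/(2*(sf b x).re) ∧ 1/(2*(sf b x).re) ≤ w1 := by
    intro b hb x hx
    have hb' : |b + δ| ≤ M + 1 := by
      have h1 := abs_le.mp hb
      have h2 := abs_le.mp hTle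
      rw [abs_le]; constructor <;> [linarith [h1.1, h2.1]; linarith [h1.2, h2.2]]
    have h1 := hulb b x hx
    have h2 := huub b hb' x hx
    have h3 := hspos b x hx
    constructor
    · rw [hw0]
      apply one_div_le_one_div_of_le (by positivity) (by linarith)
    · rw [hw1]
      apply one_div_le_one_div_of_le (by linarith) (by linarith)
  -- F as a weighted integral
  have hFw : ∀ b : ℝ, F b = ∫ x in (-1:ℝ)..β, (b + δ - (V (x:ℂ)).im) * (1/(2*(sf b x).re)) := by
    intro b
    rw [hFim b]
    apply intervalIntegral.integral_congr
    intro x hx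
    rw [huIcc] at hx
    have hx' := hsub hx
    have h1 := s8_half_im_mul (s8_ne_zero_of_re_pos (hzrepos b x hx'))
    have h3 := hspos b x hx'
    show (sf b x).im = (b + δ - (V (x:ℂ)).im) * (1/(2*(sf b x).re))
    rw [← hzim b x]
    field_simp
    linarith [h1]
  have hzero : (∫ x in (-1:ℝ)..β, (T - (V (x:ℂ)).im)) = 0 := by
    rw [intervalIntegral.integral_sub intervalIntegrable_const hIimV,
      intervalIntegral.integral_const, ← hTvim, smul_eq_mul, hT]
    field_simp
    ring
  -- the splitting estimate
  have hsplit : ∀ b : ℝ, |b + δ - T| ≤ 1 →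
      |F b - (b + δ - T) * ∫ x in (-1:ℝ)..β, (1/(2*(sf b x).re))| ≤ 2*M*(w1 - w0)*(β+1) := by
    intro b hb
    have hIw := hwintg b
    have hc2 : ContinuousOn
        (fun x : ℝ => (T - (V (x:ℂ)).im) * (1/(2*(sf b x).re) - w0)) (Set.Icc (-1:ℝ) 1) :=
      (continuousOn_const.sub (Complex.continuous_im.comp_continuousOn hVc)).mul
        ((hwcont b).sub continuousOn_const)
    have hI2 : IntervalIntegrable
        (fun x : ℝ => (T - (V (x:ℂ)).im) * (1/(2*(sf b x).re) - w0))
        MeasureTheory.volume (-1:ℝ) β := by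
      apply ContinuousOn.intervalIntegrable
      rw [huIcc]; exact hc2.mono hsub
    have hI3 : IntervalIntegrable
        (fun x : ℝ => (b + δ - (V (x:ℂ)).im) * (1/(2*(sf b x).re)))
        MeasureTheory.volume (-1:ℝ) β := by
      apply ContinuousOn.intervalIntegrable
      rw [huIcc]
      exact (((continuousOn_const.sub (Complex.continuous_im.comp_continuousOn hVc)).mul
        (hwcont b)).mono hsub)
    have hI4 : IntervalIntegrable (fun x : ℝ => (T - (V (x:ℂ)).im) * w0)
        MeasureTheory.volume (-1:ℝ) β :=
      (_root_.intervalIntegrable_const.sub hIimV).mul_const _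
    have heq : F b - (b + δ - T) * (∫ x in (-1:ℝ)..β, 1/(2*(sf b x).re))
        = ∫ x in (-1:ℝ)..β, (T - (V (x:ℂ)).im) * (1/(2*(sf b x).re) - w0) := by
      rw [hFw b, ← intervalIntegral.integral_const_mul,
        ← intervalIntegral.integral_sub hI3 (hIw.const_mul (b + δ - T))]
      have hpw : ∀ x ∈ Set.uIcc (-1:ℝ) β,
          (b + δ - (V (x:ℂ)).im) * (1/(2*(sf b x).re))
            - (b + δ - T) * (1/(2*(sf b x).re))
          = (T - (V (x:ℂ)).im) * (1/(2*(sf b x).re) - w0) + (T - (V (x:ℂ)).im) * w0 := by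
        intro x hx; ring
      rw [intervalIntegral.integral_congr hpw,
        intervalIntegral.integral_add hI2 hI4,
        intervalIntegral.integral_mul_const, hzero, zero_mul, add_zero]
    rw [heq]
    have hbnd : ∀ x ∈ Set.uIoc (-1:ℝ) β,
        ‖(T - (V (x:ℂ)).im) * (1/(2*(sf b x).re) - w0)‖ ≤ 2*M*(w1 - w0) := by
      intro x hx
      rw [huIoc] at hx
      have hx' : x ∈ Set.Icc (-1:ℝ) 1 := hsub ⟨hx.1.le, hx.2⟩
      rw [Real.norm_eq_abs, abs_mul]
      have e1 : |T - (V (x:ℂ)).im| ≤ 2*M := by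
        have h1 := abs_le.mp hTle
        have h2 := abs_le.mp (himV x hx')
        rw [abs_le]; constructor <;> [linarith [h1.1, h2.2]; linarith [h1.2, h2.1]]
      have e2 : |1/(2*(sf b x).re) - w0| ≤ w1 - w0 := by
        have h := hwlb b hb x hx'
        rw [abs_le]; constructor <;> [linarith [h.1]; linarith [h.2]]
      calc |T - (V (x:ℂ)).im| * |1/(2*(sf b x).re) - w0| ≤ (2*M) * (w1 - w0) := by
            apply mul_le_mul e1 e2 (abs_nonneg _) (by linarith)
        _ = 2*M*(w1 - w0) := by ring
    have hb2 := intervalIntegral.norm_integral_le_of_norm_le_const hbnd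
    rw [Real.norm_eq_abs] at hb2
    have habs : |β - (-1:ℝ)| = β + 1 := by rw [abs_of_pos (by linarith)]; ring
    rw [habs] at hb2
    exact hb2
  -- lower bound for the weight integral
  have hwint_lb : ∀ b : ℝ, |b + δ - T| ≤ 1 →
      (β+1) * w0 ≤ ∫ x in (-1:ℝ)..β, 1/(2*(sf b x).re) := by
    intro b hb
    have h := intervalIntegral.integral_mono_on (by linarith : (-1:ℝ) ≤ β)
      (_root_.intervalIntegrable_const (c := w0)) (hwintg b)
      (fun x hx => (hwlb b hb x (hsub hx)).1)
    rw [intervalIntegral.integral_const, smul_eq_mul] at h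
    nlinarith [h]
  -- the key numeric inequality
  have key0 : 2*a*M*(r₂ - r₁) < C * r₁ := by
    have hd : (r₂ - r₁) * (r₂ + r₁) = 4*M + 1 := by nlinarith [hr₁sq, hr₂sq]
    have he : 2*r₁*(r₂ - r₁) ≤ 4*M + 1 := by nlinarith [hr₁₂, hr₁one]
    have hg : a*M*(4*M+1) < C * (a - M) := by nlinarith [hCa, hM1, hapos, hCpos]
    have h6 : 2*a*M*(r₂ - r₁) * r₁ < (C * r₁) * r₁ := by
      nlinarith [he, hg, hapos, hM1, hr₁one, hr₁sq,
        mul_le_mul_of_nonneg_left he (by nlinarith : (0:ℝ) ≤ a*M)]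
    exact lt_of_mul_lt_mul_right h6 (by linarith)
  have key : 2*M*(w1 - w0) < (C/a) * w0 := by
    have h7 : w1 - w0 = (r₂ - r₁)/(2*(r₁*r₂)) := by
      rw [hw0, hw1]
      field_simp
    have h8 : (C/a) * w0 = C/(2*(a*r₂)) := by
      rw [hw0]; field_simp
    rw [h7, h8, ← mul_div_assoc]
    rw [div_lt_div_iff₀ (by positivity) (by positivity)]
    nlinarith [key0, hr₂pos, hr₁one]
  have hεpos : 0 < C/a := div_pos hCpos hapos
  have hε1 : C/a ≤ 1 := (div_le_one hapos).mpr hCa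
  -- sign estimates
  have hbp : 0 < F (T - δ + C/a) := by
    have e : (T - δ + C/a) + δ - T = C/a := by ring
    have hbb : |(T - δ + C/a) + δ - T| ≤ 1 := by rw [e, abs_of_pos hεpos]; exact hε1
    have h1 := hsplit _ hbb
    have h2 := hwint_lb _ hbb
    rw [e] at h1
    have h3 := (abs_le.mp h1).1
    nlinarith [h3, h2, key, hL, hεpos, hw0pos,
      mul_le_mul_of_nonneg_left h2 hεpos.le,
      mul_lt_mul_of_pos_right key hL]
  have hbm : F (T - δ - C/a) < 0 := by
    have e : (T - δ - C/a) + δ - T = -(C/a) := by ring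
    have hbb : |(T - δ - C/a) + δ - T| ≤ 1 := by
      rw [e, abs_neg, abs_of_pos hεpos]; exact hε1
    have h1 := hsplit _ hbb
    have h2 := hwint_lb _ hbb
    rw [e] at h1
    have h3 := (abs_le.mp h1).2
    nlinarith [h3, h2, key, hL, hεpos, hw0pos,
      mul_le_mul_of_nonneg_left h2 hεpos.le,
      mul_lt_mul_of_pos_right key hL]
  -- existence via IVT
  have hle : T - δ - C/a ≤ T - δ + C/a := by linarith
  have hIVT := intermediate_value_Icc hle hlip.continuous.continuousOn
  have h0mem : (0:ℝ) ∈ Set.Icc (F (T - δ - C/a)) (F (T - δ + C/a)) := ⟨hbm.le, hbp.le⟩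
  obtain ⟨bz, hbzmem, hbz0⟩ := hIVT h0mem
  constructor
  · exact ⟨bz, hbz0, fun y hy => hmono.injective ((show F y = 0 from hy).trans hbz0.symm)⟩
  · intro b hb0
    have hb0' : F b = 0 := hb0
    have hblt : b < T - δ + C/a := by
      by_contra hcon
      push_neg at hcon
      have := hmono.monotone hcon
      linarith
    have hbgt : T - δ - C/a < b := by
      by_contra hcon
      push_neg at hcon
      have := hmono.monotone hcon
      linarith
    have : |b - (T - δ)| ≤ C/a := by
      rw [abs_le]; constructor <;> linarith
    exact this
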